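/- Let Ω ⊆ ℝ^d be open with nonempty boundary and let x ∈ ∂Ω be an LCDD boundary point in standard position. Then T^B_x(closure(Ω)) equals the closure of F̃_x(Ω), the interior of T^B_x(closure(Ω)) equals the interior of F̃_x(Ω), and the topological frontier of T^B_x(closure(Ω)) equals the topological frontier of F̃_x(Ω). -/

import Mathlib

open Set Topology Filter MeasureTheory

noncomputable section

/-- The epigraph of `γ : ℝ^{d-1} → ℝ`, as a subset of `ℝ^d ≃ ℝ^{d-1} × ℝ`. -/
def epi {n : ℕ} (γ : EuclideanSpace ℝ (Fin n) → ℝ) : Set (EuclideanSpace ℝ (Fin n) × ℝ) :=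
  {y | γ y.1 ≤ y.2}

/-- The strict epigraph of `γ`. -/
def epiStrict {n : ℕ} (γ : EuclideanSpace ℝ (Fin n) → ℝ) : Set (EuclideanSpace ℝ (Fin n) × ℝ) :=
  {y | γ y.1 < y.2}

/-- The Bouligand tangent cone of `A` at `a`: `0` together with all `v ≠ 0` such that there is a
sequence `(u m)` in `A` with `u m ≠ a`, `u m → a`, and `(u m - a)/‖u m - a‖ → v/‖v‖`. -/
def bouligand {E : Type*} [NormedAddCommGroup E] [NormedSpace ℝ E] (A : Set E) (a : E) :
    Set E :=
  {0} ∪ {v | v ≠ 0 ∧ ∃ u : ℕ → E, (∀ m, u m ∈ A) ∧ (∀ m, u m ≠ a) ∧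
    Tendsto u atTop (nhds a) ∧
    Tendsto (fun m => ‖u m - a‖⁻¹ • (u m - a)) atTop (nhds (‖v‖⁻¹ • v))}

/-- The open feasible direction cone of `Ω` at `x`. -/
def feasible {E : Type*} [AddCommGroup E] [Module ℝ E] (Ω : Set E) (x : E) : Set E :=
  {v | ∃ tv > (0 : ℝ), ∀ t ∈ Set.Ioo (0 : ℝ) tv, x + t • v ∈ Ω}

set_option maxHeartbeats 1000000 in
/-- at an LCDD boundary point `x` of an open set `Ω` in standard position, the
Bouligand tangent cone of `closure Ω` equals the closure of the open feasible direction cone,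
their interiors coincide, and their topological frontiers coincide. -/
theorem stmt_4 (n : ℕ) (hn : 1 ≤ n) (Ω : Set (EuclideanSpace ℝ (Fin n) × ℝ))
    (hΩ : IsOpen Ω) (hbd : (frontier Ω).Nonempty)
    (x : EuclideanSpace ℝ (Fin n) × ℝ) (hx : x ∈ frontier Ω)
    (δ : ℝ) (hδ : 0 < δ) (K : NNReal) (γ : EuclideanSpace ℝ (Fin n) → ℝ)
    (hγ : LipschitzWith K γ)
    (hcl : closure Ω ∩ Metric.ball x δ = epi γ ∩ Metric.ball x δ)
    (hop : Ω ∩ Metric.ball x δ = epiStrict γ ∩ Metric.ball x δ)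
    (g : EuclideanSpace ℝ (Fin n) → ℝ) (hgc : Continuous g)
    (hg : ∀ v' : EuclideanSpace ℝ (Fin n),
      Tendsto (fun t : ℝ => (γ (x.1 + t • v') - γ x.1) / t) (𝓝[>] 0) (𝓝 (g v'))) :
    bouligand (closure Ω) x = closure (feasible Ω x) ∧
    interior (bouligand (closure Ω) x) = interior (feasible Ω x) ∧
    frontier (bouligand (closure Ω) x) = frontier (feasible Ω x) := by
  have hγc : Continuous γ := hγ.continuous
  have hxc : x ∈ closure Ω := frontier_subset_closure hx
  have hxnΩ : x ∉ Ω := fun h => hx.2 (by rwa [hΩ.interior_eq])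
  have hxb : x ∈ Metric.ball x δ := Metric.mem_ball_self hδ
  have hxe : γ x.1 ≤ x.2 := by
    have h : x ∈ epi γ ∩ Metric.ball x δ := by rw [← hcl]; exact ⟨hxc, hxb⟩
    exact h.1
  have hx2 : x.2 = γ x.1 := by
    refine le_antisymm ?_ hxe
    by_contra h
    push_neg at h
    have : x ∈ Ω ∩ Metric.ball x δ := by rw [hop]; exact ⟨h, hxb⟩
    exact hxnΩ this.1
  -- g vanishes at 0
  have hg0 : g 0 = 0 := by
    have h1 : Tendsto (fun t : ℝ => (γ (x.1 + t • (0 : EuclideanSpace ℝ (Fin n))) - γ x.1) / t)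
        (𝓝[>] 0) (𝓝 0) := by
      simp only [smul_zero, add_zero, sub_self, zero_div]
      exact tendsto_const_nhds
    exact tendsto_nhds_unique (hg 0) h1
  -- positive homogeneity of g
  have hghom : ∀ c : ℝ, 0 < c → ∀ v' : EuclideanSpace ℝ (Fin n), g (c • v') = c * g v' := by
    intro c hc v'
    have hmap : Tendsto (fun t : ℝ => c * t) (𝓝[>] 0) (𝓝[>] 0) := by
      rw [tendsto_nhdsWithin_iff]
      constructor
      · have h1 : Tendsto (fun t : ℝ => c * t) (𝓝 0) (𝓝 (c * 0)) := (tendsto_id.const_mul c)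
        have h2 := h1.mono_left (nhdsWithin_le_nhds : 𝓝[>] (0:ℝ) ≤ 𝓝 0)
        simpa using h2
      · filter_upwards [eventually_mem_nhdsWithin] with t ht
        exact mul_pos hc ht
    have h2 := ((hg v').comp hmap).const_mul c
    refine tendsto_nhds_unique (Tendsto.congr' ?_ (hg (c • v'))) h2
    filter_upwards [eventually_mem_nhdsWithin] with t ht
    show (γ (x.1 + t • (c • v')) - γ x.1) / t
        = c * ((γ (x.1 + (c * t) • v') - γ x.1) / (c * t))
    rw [smul_smul, mul_comm t c, ← mul_div_assoc, mul_div_mul_left _ _ hc.ne']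
  -- the cone sets
  have hCclosed : IsClosed {v : EuclideanSpace ℝ (Fin n) × ℝ | g v.1 ≤ v.2} :=
    isClosed_le (hgc.comp continuous_fst) continuous_snd
  have hOopen : IsOpen {v : EuclideanSpace ℝ (Fin n) × ℝ | g v.1 < v.2} :=
    isOpen_lt (hgc.comp continuous_fst) continuous_snd
  have hOC : {v : EuclideanSpace ℝ (Fin n) × ℝ | g v.1 < v.2}
      ⊆ {v : EuclideanSpace ℝ (Fin n) × ℝ | g v.1 ≤ v.2} := fun v hv => show g v.1 ≤ v.2 from le_of_lt hv
  have hclO : closure {v : EuclideanSpace ℝ (Fin n) × ℝ | g v.1 < v.2}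
      = {v : EuclideanSpace ℝ (Fin n) × ℝ | g v.1 ≤ v.2} := by
    refine subset_antisymm (closure_minimal hOC hCclosed) ?_
    intro v hv
    have hseq : Tendsto (fun k : ℕ => ((v.1, v.2 + 1 / ((k : ℝ) + 1))
        : EuclideanSpace ℝ (Fin n) × ℝ)) atTop (𝓝 (v.1, v.2)) := by
      refine Tendsto.prodMk_nhds tendsto_const_nhds ?_
      have hh := tendsto_one_div_add_atTop_nhds_zero_nat.const_add v.2
      simpa using hh
    refine mem_closure_of_tendsto hseq (Eventually.of_forall fun k => ?_)
    show g v.1 < v.2 + 1 / ((k : ℝ) + 1)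
    have hk : (0:ℝ) < 1 / ((k : ℝ) + 1) := by positivity
    have hv2 : g v.1 ≤ v.2 := hv
    linarith
  have hintC : interior {v : EuclideanSpace ℝ (Fin n) × ℝ | g v.1 ≤ v.2}
      = {v : EuclideanSpace ℝ (Fin n) × ℝ | g v.1 < v.2} := by
    refine subset_antisymm ?_ (interior_maximal hOC hOopen)
    intro v hv
    obtain ⟨ε, hε, hb⟩ := Metric.mem_nhds_iff.1 (mem_interior_iff_mem_nhds.1 hv)
    have hmem : ((v.1, v.2 - ε / 2) : EuclideanSpace ℝ (Fin n) × ℝ) ∈ Metric.ball v ε := by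
      rw [Metric.mem_ball, Prod.dist_eq]
      have h1 : dist (v.2 - ε / 2) v.2 = ε / 2 := by
        rw [Real.dist_eq, show v.2 - ε / 2 - v.2 = -(ε / 2) by ring, abs_neg,
          abs_of_pos (by linarith)]
      simp only [dist_self, h1]
      rw [max_eq_right (by linarith)]
      linarith
    have h2 : g v.1 ≤ v.2 - ε / 2 := hb hmem
    show g v.1 < v.2
    linarith
  -- eventual ball membership along rays
  have hballray : ∀ v : EuclideanSpace ℝ (Fin n) × ℝ,
      ∀ᶠ t in 𝓝[>] (0 : ℝ), x + t • v ∈ Metric.ball x δ := by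
    intro v
    have hcont : Tendsto (fun t : ℝ => x + t • v) (𝓝 0) (𝓝 x) := by
      have h1 : Continuous (fun t : ℝ => x + t • v) :=
        continuous_const.add (continuous_id.smul continuous_const)
      simpa using h1.tendsto 0
    exact ((hcont.mono_left nhdsWithin_le_nhds).eventually
      (eventually_of_mem (Metric.ball_mem_nhds x hδ) fun y hy => hy))
  -- O ⊆ feasible
  have hOfeas : {v : EuclideanSpace ℝ (Fin n) × ℝ | g v.1 < v.2} ⊆ feasible Ω x := by
    intro v hv
    have h1 : ∀ᶠ t in 𝓝[>] (0 : ℝ), (γ (x.1 + t • v.1) - γ x.1) / t < v.2 :=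
      (hg v.1).eventually_lt_const hv
    have h4 := (h1.and ((hballray v).and eventually_mem_nhdsWithin))
    obtain ⟨tv, htv, hsub⟩ := mem_nhdsGT_iff_exists_Ioo_subset.1 h4
    refine ⟨tv, htv, fun t ht => ?_⟩
    obtain ⟨hq, hb, htpos⟩ := hsub ht
    have hmem : x + t • v ∈ epiStrict γ := by
      show γ ((x + t • v).1) < (x + t • v).2
      have h5 : γ (x.1 + t • v.1) - γ x.1 < v.2 * t := (div_lt_iff₀ htpos).1 hq
      simp only [Prod.fst_add, Prod.snd_add, Prod.smul_fst, Prod.smul_snd, smul_eq_mul]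
      nlinarith [h5, hx2]
    have hmm : x + t • v ∈ Ω ∩ Metric.ball x δ := by rw [hop]; exact ⟨hmem, hb⟩
    exact hmm.1
  -- feasible ⊆ C
  have hfeasC : feasible Ω x ⊆ {v : EuclideanSpace ℝ (Fin n) × ℝ | g v.1 ≤ v.2} := by
    rintro v ⟨tv, htv, hmem⟩
    have h3 : Ioo (0 : ℝ) tv ∈ 𝓝[>] (0 : ℝ) := Ioo_mem_nhdsGT_of_mem ⟨le_refl 0, htv⟩
    show g v.1 ≤ v.2
    refine le_of_tendsto (hg v.1) ?_
    filter_upwards [hballray v, h3] with t hb ht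
    have hΩt : x + t • v ∈ epiStrict γ ∩ Metric.ball x δ := by
      rw [← hop]; exact ⟨hmem t ht, hb⟩
    have h5 : γ ((x + t • v).1) < (x + t • v).2 := hΩt.1
    simp only [Prod.fst_add, Prod.snd_add, Prod.smul_fst, Prod.smul_snd, smul_eq_mul] at h5
    rw [div_le_iff₀ ht.1]
    nlinarith [h5, hx2]
  -- bouligand ⊆ C
  have hBsub : bouligand (closure Ω) x ⊆ {v : EuclideanSpace ℝ (Fin n) × ℝ | g v.1 ≤ v.2} := by
    rintro v (hv | ⟨hv0, u, huA, hune, hulim, hudir⟩)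
    · have hv' : v = 0 := hv
      subst hv'
      show g (0 : EuclideanSpace ℝ (Fin n) × ℝ).1 ≤ (0 : EuclideanSpace ℝ (Fin n) × ℝ).2
      simp [hg0]
    · have hvn : ‖v‖ ≠ 0 := norm_ne_zero_iff.2 hv0
      have hvpos : (0 : ℝ) < ‖v‖ := norm_pos_iff.2 hv0
      set wv : EuclideanSpace ℝ (Fin n) × ℝ := ‖v‖⁻¹ • v with hwv
      set r : ℕ → ℝ := fun m => ‖u m - x‖ with hrdef
      have hrpos : ∀ m, 0 < r m := fun m => norm_pos_iff.2 (sub_ne_zero.2 (hune m))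
      set w : ℕ → EuclideanSpace ℝ (Fin n) × ℝ := fun m => ‖u m - x‖⁻¹ • (u m - x) with hwdef
      have hw : Tendsto w atTop (𝓝 wv) := hudir
      have hr0 : Tendsto r atTop (𝓝 0) := by
        have h1 : Tendsto (fun m => u m - x) atTop (𝓝 (x - x)) := hulim.sub tendsto_const_nhds
        simpa [hrdef] using h1.norm
      have hrW : Tendsto r atTop (𝓝[>] 0) := by
        rw [tendsto_nhdsWithin_iff]
        exact ⟨hr0, Eventually.of_forall fun m => hrpos m⟩
      have hid : ∀ m, u m = x + r m • w m := by
        intro m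
        rw [hwdef]
        simp only [hrdef]
        rw [smul_inv_smul₀ (hrpos m).ne']
        abel
      have hball : ∀ᶠ m in atTop, γ (x.1 + r m • (w m).1) ≤ x.2 + r m * (w m).2 := by
        have hballm : ∀ᶠ m in atTop, u m ∈ Metric.ball x δ :=
          hulim.eventually (eventually_of_mem (Metric.ball_mem_nhds x hδ) fun y hy => hy)
        filter_upwards [hballm] with m hb
        have h1 : u m ∈ epi γ ∩ Metric.ball x δ := by rw [← hcl]; exact ⟨huA m, hb⟩
        have h2 : γ ((u m).1) ≤ (u m).2 := h1.1
        rw [hid m] at h2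
        simpa [Prod.fst_add, Prod.snd_add, Prod.smul_fst, Prod.smul_snd, smul_eq_mul] using h2
      have hquot_le : ∀ᶠ m in atTop,
          (γ (x.1 + r m • (w m).1) - γ x.1) / r m ≤ (w m).2 := by
        filter_upwards [hball] with m h
        rw [div_le_iff₀ (hrpos m)]
        nlinarith [h, hx2]
      have hA : Tendsto (fun m => (γ (x.1 + r m • wv.1) - γ x.1) / r m) atTop (𝓝 (g wv.1)) :=
        (hg wv.1).comp hrW
      have hw1 : Tendsto (fun m => (w m).1) atTop (𝓝 wv.1) := (continuous_fst.tendsto wv).comp hw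
      have hdiff : Tendsto
          (fun m => (γ (x.1 + r m • (w m).1) - γ (x.1 + r m • wv.1)) / r m) atTop (𝓝 0) := by
        apply squeeze_zero_norm (a := fun m => (K : ℝ) * dist ((w m).1) wv.1)
        · intro m
          have hb1 : dist (γ (x.1 + r m • (w m).1)) (γ (x.1 + r m • wv.1))
              ≤ (K : ℝ) * dist (x.1 + r m • (w m).1) (x.1 + r m • wv.1) := hγ.dist_le_mul _ _
          have hb2 : dist (x.1 + r m • (w m).1) (x.1 + r m • wv.1)
              = r m * dist ((w m).1) wv.1 := by
            rw [dist_add_left, dist_smul₀, Real.norm_eq_abs, abs_of_pos (hrpos m)]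
          rw [Real.norm_eq_abs, abs_div, abs_of_pos (hrpos m), ← Real.dist_eq]
          rw [div_le_iff₀ (hrpos m)]
          calc dist (γ (x.1 + r m • (w m).1)) (γ (x.1 + r m • wv.1))
              ≤ (K : ℝ) * (r m * dist ((w m).1) wv.1) := by rw [← hb2]; exact hb1
            _ = (K : ℝ) * dist ((w m).1) wv.1 * r m := by ring
        · have h1 : Tendsto (fun m => dist ((w m).1) wv.1) atTop (𝓝 (dist wv.1 wv.1)) :=
            hw1.dist tendsto_const_nhds
          simpa using h1.const_mul (K : ℝ)
      have herr : Tendsto (fun m => (γ (x.1 + r m • (w m).1) - γ x.1) / r m)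
          atTop (𝓝 (g wv.1)) := by
        have h := hdiff.add hA
        rw [zero_add] at h
        refine h.congr fun m => ?_
        rw [← add_div]
        ring_nf
      have hw2 : Tendsto (fun m => (w m).2) atTop (𝓝 wv.2) := (continuous_snd.tendsto wv).comp hw
      have hkey : g wv.1 ≤ wv.2 := le_of_tendsto_of_tendsto herr hw2 hquot_le
      show g v.1 ≤ v.2
      have h1 : wv.1 = ‖v‖⁻¹ • v.1 := by rw [hwv]; rfl
      have h2 : wv.2 = ‖v‖⁻¹ * v.2 := by rw [hwv]; rfl
      rw [h1, h2, hghom (‖v‖⁻¹) (by positivity) v.1] at hkey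
      have := (mul_le_mul_iff_right₀ (show (0:ℝ) < ‖v‖⁻¹ by positivity)).1 hkey
      exact this
  -- C ⊆ bouligand
  have hCB : {v : EuclideanSpace ℝ (Fin n) × ℝ | g v.1 ≤ v.2} ⊆ bouligand (closure Ω) x := by
    intro v hv
    have hv' : g v.1 ≤ v.2 := hv
    by_cases hv0 : v = 0
    · left; exact hv0
    right
    refine ⟨hv0, ?_⟩
    set f : ℝ → EuclideanSpace ℝ (Fin n) × ℝ :=
      fun t => (x.1 + t • v.1, γ (x.1 + t • v.1) + t * (v.2 - g v.1)) with hfdef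
    have hfc : Continuous f := by
      refine Continuous.prodMk ?_ ?_
      · exact continuous_const.add (continuous_id.smul continuous_const)
      · exact (hγc.comp (continuous_const.add (continuous_id.smul continuous_const))).add
          (continuous_id.mul continuous_const)
    have hf0 : f 0 = x := by
      rw [hfdef]
      simp only [zero_smul, add_zero, zero_mul]
      rw [← hx2]
    have hftend : Tendsto f (𝓝 0) (𝓝 x) := hf0 ▸ hfc.tendsto 0
    obtain ⟨ε, hε, hballf⟩ := Metric.eventually_nhds_iff.1
      (hftend.eventually (eventually_of_mem (Metric.ball_mem_nhds x hδ) fun y hy => hy))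
    set t : ℕ → ℝ := fun m => ε / 2 * (1 / ((m : ℝ) + 1)) with htdef
    have htpos : ∀ m, 0 < t m := by intro m; rw [htdef]; positivity
    have htlt : ∀ m, t m < ε := by
      intro m
      rw [htdef]
      have h1 : 1 / ((m : ℝ) + 1) ≤ 1 := by
        rw [div_le_one (by positivity)]
        have : (0:ℝ) ≤ (m:ℝ) := Nat.cast_nonneg m
        linarith
      have h2 : ε / 2 * (1 / ((m : ℝ) + 1)) ≤ ε / 2 * 1 :=
        mul_le_mul_of_nonneg_left h1 (by linarith)
      linarith
    have ht0 : Tendsto t atTop (𝓝 0) := by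
      rw [htdef]
      have := tendsto_one_div_add_atTop_nhds_zero_nat.const_mul (ε / 2)
      simpa using this
    have htW : Tendsto t atTop (𝓝[>] 0) := by
      rw [tendsto_nhdsWithin_iff]
      exact ⟨ht0, Eventually.of_forall htpos⟩
    have htball : ∀ m, f (t m) ∈ Metric.ball x δ := by
      intro m
      apply hballf
      rw [Real.dist_eq, sub_zero, abs_of_pos (htpos m)]
      exact htlt m
    refine ⟨fun m => f (t m), ?_, ?_, ?_, ?_⟩
    · intro m
      have hepi : f (t m) ∈ epi γ := by
        show γ ((f (t m)).1) ≤ (f (t m)).2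
        rw [hfdef]
        simp only
        nlinarith [htpos m, hv']
      have hmm : f (t m) ∈ closure Ω ∩ Metric.ball x δ := by
        rw [hcl]; exact ⟨hepi, htball m⟩
      exact hmm.1
    · intro m hcontra
      have hceq : f (t m) = x := hcontra
      by_cases hv1 : v.1 = 0
      · have hgv1 : g v.1 = 0 := by rw [hv1, hg0]
        have hv2 : 0 < v.2 := by
          have h0 : (0:ℝ) ≤ v.2 := by rw [← hgv1]; exact hv'
          rcases h0.lt_or_eq with h | h
          · exact h
          · exact absurd (Prod.ext hv1 h.symm) hv0
        have h2 : (f (t m)).2 = x.2 := by rw [hceq]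
        have h3 : (f (t m)).2 = γ x.1 + t m * v.2 := by
          simp only [hfdef, hv1, smul_zero, add_zero, hg0]
          ring
        rw [h3, ← hx2] at h2
        nlinarith [htpos m, hv2]
      · have h1 : (f (t m)).1 = x.1 := by rw [hceq]
        have h1' : x.1 + t m • v.1 = x.1 := by
          simpa only [hfdef] using h1
        have h2 : t m • v.1 = 0 := add_eq_left.1 h1'
        rcases smul_eq_zero.1 h2 with h | h
        · exact absurd h (htpos m).ne'
        · exact hv1 h
    · exact (hftend.comp (htW.mono_right nhdsWithin_le_nhds))
    · -- direction convergence
      set z : ℕ → EuclideanSpace ℝ (Fin n) × ℝ :=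
        fun m => (v.1, (γ (x.1 + t m • v.1) - γ x.1) / t m + (v.2 - g v.1)) with hzdef
      have hz : Tendsto z atTop (𝓝 v) := by
        have h2 : Tendsto (fun m => (γ (x.1 + t m • v.1) - γ x.1) / t m + (v.2 - g v.1))
            atTop (𝓝 (g v.1 + (v.2 - g v.1))) :=
          ((hg v.1).comp htW).add tendsto_const_nhds
        have h3 : g v.1 + (v.2 - g v.1) = v.2 := by ring
        rw [h3] at h2
        have h4 : Tendsto z atTop (𝓝 (v.1, v.2)) :=
          Tendsto.prodMk_nhds tendsto_const_nhds h2
        exact h4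
      have hid : ∀ m, f (t m) - x = t m • z m := by
        intro m
        refine Prod.ext ?_ ?_
        · rw [hfdef, hzdef]
          simp only [Prod.fst_sub, Prod.smul_fst]
          abel
        · rw [hfdef, hzdef]
          simp only [Prod.snd_sub, Prod.smul_snd, smul_eq_mul]
          rw [hx2]
          have htm : t m ≠ 0 := (htpos m).ne'
          field_simp
          ring
      have hsimp : ∀ m, ‖f (t m) - x‖⁻¹ • (f (t m) - x) = ‖z m‖⁻¹ • z m := by
        intro m
        rw [hid m, norm_smul, Real.norm_eq_abs, abs_of_pos (htpos m), smul_smul, mul_inv,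
          mul_comm (t m)⁻¹ ‖z m‖⁻¹, mul_assoc, inv_mul_cancel₀ (htpos m).ne', mul_one]
      have hgoal : Tendsto (fun m => ‖z m‖⁻¹ • z m) atTop (𝓝 (‖v‖⁻¹ • v)) := by
        have hn1 : Tendsto (fun m => ‖z m‖⁻¹) atTop (𝓝 ‖v‖⁻¹) :=
          (hz.norm).inv₀ (norm_ne_zero_iff.2 hv0)
        exact hn1.smul hz
      refine hgoal.congr fun m => ?_
      exact (hsimp m).symm
  have hBC : bouligand (closure Ω) x = {v : EuclideanSpace ℝ (Fin n) × ℝ | g v.1 ≤ v.2} :=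
    subset_antisymm hBsub hCB
  have hcF : closure (feasible Ω x) = {v : EuclideanSpace ℝ (Fin n) × ℝ | g v.1 ≤ v.2} := by
    refine subset_antisymm (closure_minimal hfeasC hCclosed) ?_
    rw [← hclO]
    exact closure_mono hOfeas
  have hiF : interior (feasible Ω x) = {v : EuclideanSpace ℝ (Fin n) × ℝ | g v.1 < v.2} := by
    refine subset_antisymm ?_ (interior_maximal hOfeas hOopen)
    rw [← hintC]
    exact interior_mono hfeasC
  refine ⟨?_, ?_, ?_⟩
  · rw [hBC, hcF]
  · rw [hBC, hintC, hiF]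
  · rw [frontier, frontier, hBC, hiF, hCclosed.closure_eq, hcF, hintC]
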